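/- Let β = 1/5, c₀ = 4/5, and let u₂₀₀(x) = −1/(2c₀), u₁₁₀(x) = −cos(3x)/(c₀ − 9 + 81β), u₀₂₀(x) = −1/(2c₀) − cos(4x)/(2(c₀ − 16 + 256β)). Then for all a, b ∈ ℝ: (1/π)∫_{−π}^{π} 2(a·cos(x) + b·cos(2x))·(a²·u₂₀₀(x) + ab·u₁₁₀(x) + b²·u₀₂₀(x))·cos(x) dx = −(5/4)a³ − (11/8)ab², and (1/π)∫_{−π}^{π} 2(a·cos(x) + b·cos(2x))·(a²·u₂₀₀(x) + ab·u₁₁₀(x) + b²·u₀₂₀(x))·cos(2x) dx = −(11/8)a²b − (91/72)b³. -/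

import Mathlib

open Real

private lemma aux_sin_pi_zero : ∀ n : ℕ, Real.sin ((n : ℝ) * Real.pi) = 0 :=
  Real.sin_nat_mul_pi

private lemma aux_int_cos (c : ℝ) (hc : c ≠ 0) (h0 : Real.sin (c * Real.pi) = 0) :
    ∫ x in (-Real.pi)..Real.pi, Real.cos (c * x) = 0 := by
  have hd : ∀ x ∈ Set.uIcc (-Real.pi) Real.pi,
      HasDerivAt (fun y => Real.sin (c * y) / c) (Real.cos (c * x)) x := by
    intro x _
    have h1 : HasDerivAt (fun y : ℝ => c * y) c x := by
      simpa using (hasDerivAt_id x).const_mul c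
    have h2 := ((Real.hasDerivAt_sin (c * x)).comp x h1).div_const c
    rw [mul_div_cancel_right₀ _ hc] at h2
    exact h2
  rw [intervalIntegral.integral_eq_sub_of_hasDerivAt hd
    ((Real.continuous_cos.comp (continuous_const.mul continuous_id)).intervalIntegrable _ _)]
  rw [show c * -Real.pi = -(c * Real.pi) by ring, Real.sin_neg, h0]
  ring

private lemma aux_integral (K d1 d2 d3 d4 d5 d6 d7 d8 : ℝ) :
    ∫ x in (-Real.pi)..Real.pi,
      (K + d1 * Real.cos x + d2 * Real.cos (2 * x) + d3 * Real.cos (3 * x)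
        + d4 * Real.cos (4 * x) + d5 * Real.cos (5 * x) + d6 * Real.cos (6 * x)
        + d7 * Real.cos (7 * x) + d8 * Real.cos (8 * x)) = 2 * Real.pi * K := by
  have s : ∀ n : ℕ, n ≠ 0 → ∫ x in (-Real.pi)..Real.pi, Real.cos ((n : ℝ) * x) = 0 := by
    intro n hn
    exact aux_int_cos _ (by exact_mod_cast hn) (aux_sin_pi_zero n)
  have i1 : ∫ x in (-Real.pi)..Real.pi, Real.cos x = 0 := by
    have := s 1 one_ne_zero; push_cast at this; simpa using this
  have i2 := s 2 (by norm_num); have i3 := s 3 (by norm_num)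
  have i4 := s 4 (by norm_num); have i5 := s 5 (by norm_num)
  have i6 := s 6 (by norm_num); have i7 := s 7 (by norm_num)
  have i8 := s 8 (by norm_num)
  push_cast at i2 i3 i4 i5 i6 i7 i8
  have hint : ∀ c : ℝ, IntervalIntegrable (fun x => Real.cos (c * x))
      MeasureTheory.volume (-Real.pi) Real.pi := fun c =>
    (Real.continuous_cos.comp (continuous_const.mul continuous_id)).intervalIntegrable _ _
  have hK : IntervalIntegrable (fun _ : ℝ => K) MeasureTheory.volume (-Real.pi) Real.pi :=
    intervalIntegrable_const
  have hci : ∀ (d c : ℝ), IntervalIntegrable (fun x => d * Real.cos (c * x))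
      MeasureTheory.volume (-Real.pi) Real.pi := fun d c => (hint c).const_mul d
  have h1 : IntervalIntegrable (fun x => d1 * Real.cos x)
      MeasureTheory.volume (-Real.pi) Real.pi :=
    (continuous_const.mul Real.continuous_cos).intervalIntegrable _ _
  rw [intervalIntegral.integral_add (((((((hK.add h1).add (hci d2 2)).add (hci d3 3)).add
        (hci d4 4)).add (hci d5 5)).add (hci d6 6)).add (hci d7 7)) (hci d8 8),
      intervalIntegral.integral_add ((((((hK.add h1).add (hci d2 2)).add (hci d3 3)).add
        (hci d4 4)).add (hci d5 5)).add (hci d6 6)) (hci d7 7),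
      intervalIntegral.integral_add (((((hK.add h1).add (hci d2 2)).add (hci d3 3)).add
        (hci d4 4)).add (hci d5 5)) (hci d6 6),
      intervalIntegral.integral_add ((((hK.add h1).add (hci d2 2)).add (hci d3 3)).add
        (hci d4 4)) (hci d5 5),
      intervalIntegral.integral_add (((hK.add h1).add (hci d2 2)).add (hci d3 3)) (hci d4 4),
      intervalIntegral.integral_add ((hK.add h1).add (hci d2 2)) (hci d3 3),
      intervalIntegral.integral_add (hK.add h1) (hci d2 2),
      intervalIntegral.integral_add hK h1,
      intervalIntegral.integral_const_mul, intervalIntegral.integral_const_mul,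
      intervalIntegral.integral_const_mul, intervalIntegral.integral_const_mul,
      intervalIntegral.integral_const_mul, intervalIntegral.integral_const_mul,
      intervalIntegral.integral_const_mul, intervalIntegral.integral_const_mul,
      intervalIntegral.integral_const, i1, i2, i3, i4, i5, i6, i7, i8]
  rw [smul_eq_mul]
  ring

/-- The cubic terms of the Lyapunov–Schmidt bifurcation equation for the Kawahara Wilton
ripples with K = 2 (β = 1/5, c₀ = 4/5). -/
theorem kawahara_cubic_terms_K2 (β c₀ : ℝ)
    (hβ : β = 1 / 5) (hc₀ : c₀ = 4 / 5)
    (u200 u110 u020 : ℝ → ℝ)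
    (hu200 : ∀ x : ℝ, u200 x = -1 / (2 * c₀))
    (hu110 : ∀ x : ℝ, u110 x = -Real.cos (3 * x) / (c₀ - 9 + 81 * β))
    (hu020 : ∀ x : ℝ, u020 x =
      -1 / (2 * c₀) - Real.cos (4 * x) / (2 * (c₀ - 16 + 256 * β))) :
    ∀ a b : ℝ,
      (1 / Real.pi) * (∫ x in (-Real.pi)..Real.pi,
          2 * (a * Real.cos x + b * Real.cos (2 * x))
            * (a ^ 2 * u200 x + a * b * u110 x + b ^ 2 * u020 x) * Real.cos x)
        = -(5 / 4) * a ^ 3 - (11 / 8) * a * b ^ 2 ∧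
      (1 / Real.pi) * (∫ x in (-Real.pi)..Real.pi,
          2 * (a * Real.cos x + b * Real.cos (2 * x))
            * (a ^ 2 * u200 x + a * b * u110 x + b ^ 2 * u020 x) * Real.cos (2 * x))
        = -(11 / 8) * a ^ 2 * b - (91 / 72) * b ^ 3 := by
  subst hβ hc₀
  have hπ : Real.pi ≠ 0 := Real.pi_ne_zero
  -- Chebyshev-type expansions of cos (n x) as polynomials in cos x
  have cheb : ∀ x : ℝ,
      Real.cos (2 * x) = 2 * Real.cos x ^ 2 - 1 ∧
      Real.cos (3 * x) = 4 * Real.cos x ^ 3 - 3 * Real.cos x ∧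
      Real.cos (4 * x) = 8 * Real.cos x ^ 4 - 8 * Real.cos x ^ 2 + 1 ∧
      Real.cos (5 * x) = 16 * Real.cos x ^ 5 - 20 * Real.cos x ^ 3 + 5 * Real.cos x ∧
      Real.cos (6 * x) = 32 * Real.cos x ^ 6 - 48 * Real.cos x ^ 4 + 18 * Real.cos x ^ 2 - 1 ∧
      Real.cos (7 * x) = 64 * Real.cos x ^ 7 - 112 * Real.cos x ^ 5 + 56 * Real.cos x ^ 3
        - 7 * Real.cos x ∧
      Real.cos (8 * x) = 128 * Real.cos x ^ 8 - 256 * Real.cos x ^ 6 + 160 * Real.cos x ^ 4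
        - 32 * Real.cos x ^ 2 + 1 := by
    intro x
    have h2 : Real.cos (2 * x) = 2 * Real.cos x ^ 2 - 1 := Real.cos_two_mul x
    have h3 : Real.cos (3 * x) = 4 * Real.cos x ^ 3 - 3 * Real.cos x := Real.cos_three_mul x
    have h4 : Real.cos (4 * x) = 8 * Real.cos x ^ 4 - 8 * Real.cos x ^ 2 + 1 := by
      have h := Real.cos_two_mul (2 * x)
      rw [show (2 : ℝ) * (2 * x) = 4 * x by ring, h2] at h
      rw [h]; ring
    have r : ∀ n m k : ℝ, n + 1 = m → n - 1 = k →
        Real.cos (m * x) = 2 * Real.cos x * Real.cos (n * x) - Real.cos (k * x) := by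
      intro n m k hm hk
      have h := Real.two_mul_cos_mul_cos (n * x) x
      rw [show n * x - x = k * x by rw [← hk]; ring,
          show n * x + x = m * x by rw [← hm]; ring] at h
      linarith [h]
    have h5 : Real.cos (5 * x)
        = 16 * Real.cos x ^ 5 - 20 * Real.cos x ^ 3 + 5 * Real.cos x := by
      rw [r 4 5 3 (by norm_num) (by norm_num), h4, h3]; ring
    have h6 : Real.cos (6 * x)
        = 32 * Real.cos x ^ 6 - 48 * Real.cos x ^ 4 + 18 * Real.cos x ^ 2 - 1 := by
      rw [r 5 6 4 (by norm_num) (by norm_num), h5, h4]; ring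
    have h7 : Real.cos (7 * x) = 64 * Real.cos x ^ 7 - 112 * Real.cos x ^ 5
        + 56 * Real.cos x ^ 3 - 7 * Real.cos x := by
      rw [r 6 7 5 (by norm_num) (by norm_num), h6, h5]; ring
    have h8 : Real.cos (8 * x) = 128 * Real.cos x ^ 8 - 256 * Real.cos x ^ 6
        + 160 * Real.cos x ^ 4 - 32 * Real.cos x ^ 2 + 1 := by
      rw [r 7 8 6 (by norm_num) (by norm_num), h7, h6]; ring
    exact ⟨h2, h3, h4, h5, h6, h7, h8⟩
  intro a b
  constructor
  · have hcong : (∫ x in (-Real.pi)..Real.pi,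
        2 * (a * Real.cos x + b * Real.cos (2 * x))
          * (a ^ 2 * u200 x + a * b * u110 x + b ^ 2 * u020 x) * Real.cos x)
        = ∫ x in (-Real.pi)..Real.pi,
          ((-(5/8) * a^3 - (11/16) * a * b^2)
            + (-(11/16) * a^2 * b - (91/144) * b^3) * Real.cos x
            + (-(5/8) * a^3 - (25/36) * a * b^2) * Real.cos (2 * x)
            + (-(3/4) * a^2 * b - (91/144) * b^3) * Real.cos (3 * x)
            + (-(11/144) * a * b^2) * Real.cos (4 * x)
            + (-(1/16) * a^2 * b - (1/144) * b^3) * Real.cos (5 * x)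
            + (-(5/72) * a * b^2) * Real.cos (6 * x)
            + (-(1/144) * b^3) * Real.cos (7 * x)
            + (0 : ℝ) * Real.cos (8 * x)) := by
      apply intervalIntegral.integral_congr
      intro x _
      obtain ⟨h2, h3, h4, h5, h6, h7, h8⟩ := cheb x
      simp only [hu200, hu110, hu020]
      rw [h2, h3, h4, h5, h6, h7, h8]
      norm_num
      ring
    rw [hcong, aux_integral]
    field_simp
    ring
  · have hcong : (∫ x in (-Real.pi)..Real.pi,
        2 * (a * Real.cos x + b * Real.cos (2 * x))
          * (a ^ 2 * u200 x + a * b * u110 x + b ^ 2 * u020 x) * Real.cos (2 * x))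
        = ∫ x in (-Real.pi)..Real.pi,
          ((-(11/16) * a^2 * b - (91/144) * b^3)
            + (-(5/8) * a^3 - (25/36) * a * b^2) * Real.cos x
            + (-(1/16) * a^2 * b) * Real.cos (2 * x)
            + (-(5/8) * a^3 - (109/144) * a * b^2) * Real.cos (3 * x)
            + (-(11/16) * a^2 * b - (23/36) * b^3) * Real.cos (4 * x)
            + (-(1/144) * a * b^2) * Real.cos (5 * x)
            + (-(1/16) * a^2 * b) * Real.cos (6 * x)
            + (-(5/72) * a * b^2) * Real.cos (7 * x)
            + (-(1/144) * b^3) * Real.cos (8 * x)) := by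
      apply intervalIntegral.integral_congr
      intro x _
      obtain ⟨h2, h3, h4, h5, h6, h7, h8⟩ := cheb x
      simp only [hu200, hu110, hu020]
      rw [h2, h3, h4, h5, h6, h7, h8]
      norm_num
      ring
    rw [hcong, aux_integral]
    field_simp
    ring
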